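/- Let n ≥ 1 be an integer and set r₀ := √(2(n+2)). Let V, η : ℝ → ℝ be continuously differentiable on [r₀, ∞), with η nonnegative and nondecreasing on [r₀, ∞). Assume that for all r ≥ r₀: (i) n·V(r) − r·V′(r) = 2·η(r) − (4/r)·η′(r), and (ii) η(r) ≤ (n/2)·V(r). Then for all r₁ > r₂ ≥ r₀, V(r₁)/r₁^n − V(r₂)/r₂^n ≤ 2n·V(r₁)/r₁^(n+2). -/

import Mathlib

/-- Lemma 2.2: the volume-ratio comparison for self-shrinkers, from the
identity (i) of Lemma 2.1 and the average mean-curvature bound (ii). -/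
theorem volume_ratio_comparison (n : ℕ) (hn : 1 ≤ n) (V η V' η' : ℝ → ℝ)
    (hV : ∀ r ∈ Set.Ici (Real.sqrt (2 * ((n : ℝ) + 2))), HasDerivAt V (V' r) r)
    (hV'cont : ContinuousOn V' (Set.Ici (Real.sqrt (2 * ((n : ℝ) + 2)))))
    (hη : ∀ r ∈ Set.Ici (Real.sqrt (2 * ((n : ℝ) + 2))), HasDerivAt η (η' r) r)
    (hη'cont : ContinuousOn η' (Set.Ici (Real.sqrt (2 * ((n : ℝ) + 2)))))
    (hηnn : ∀ r ∈ Set.Ici (Real.sqrt (2 * ((n : ℝ) + 2))), 0 ≤ η r)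
    (hηmono : MonotoneOn η (Set.Ici (Real.sqrt (2 * ((n : ℝ) + 2)))))
    (hi : ∀ r ≥ Real.sqrt (2 * ((n : ℝ) + 2)),
      (n : ℝ) * V r - r * V' r = 2 * η r - (4 / r) * η' r)
    (hii : ∀ r ≥ Real.sqrt (2 * ((n : ℝ) + 2)), η r ≤ ((n : ℝ) / 2) * V r) :
    ∀ r₁ r₂ : ℝ, Real.sqrt (2 * ((n : ℝ) + 2)) ≤ r₂ → r₂ < r₁ →
      V r₁ / r₁ ^ n - V r₂ / r₂ ^ n ≤ 2 * n * V r₁ / r₁ ^ (n + 2) := by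
  intro r₁ r₂ hr₂ hlt
  set r0 : ℝ := Real.sqrt (2 * ((n : ℝ) + 2)) with hr0def
  have hr0pos : 0 < r0 := Real.sqrt_pos.mpr (by positivity)
  have hr0sq : r0 ^ 2 = 2 * ((n : ℝ) + 2) := Real.sq_sqrt (by positivity)
  obtain ⟨m, rfl⟩ : ∃ m, n = m + 1 := ⟨n - 1, (Nat.succ_pred_eq_of_pos hn).symm⟩
  set g : ℝ → ℝ := fun r => V r / r ^ (m + 1) - 4 * (η r / r ^ (m + 3)) with hgdef
  -- derivative of g
  have hg : ∀ r ∈ Set.Ici r0, HasDerivAt g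
      (2 * η r * (2 * ((m : ℝ) + 1 + 2) - r ^ 2) / r ^ (m + 4)) r := by
    intro r hr
    have hrpos : 0 < r := lt_of_lt_of_le hr0pos hr
    have hrne : r ≠ 0 := ne_of_gt hrpos
    have h1 : HasDerivAt (fun r => V r / r ^ (m + 1))
        ((V' r * r ^ (m + 1) - V r * ((↑(m + 1) : ℝ) * r ^ m)) / (r ^ (m + 1)) ^ 2) r :=
      (hV r hr).div (hasDerivAt_pow (m + 1) r) (by positivity)
    have h2 : HasDerivAt (fun r => η r / r ^ (m + 3))
        ((η' r * r ^ (m + 3) - η r * ((↑(m + 3) : ℝ) * r ^ (m + 2))) / (r ^ (m + 3)) ^ 2) r :=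
      (hη r hr).div (hasDerivAt_pow (m + 3) r) (by positivity)
    have h3 := h1.sub (h2.const_mul 4)
    refine h3.congr_deriv (Eq.symm ?_)
    have key := hi r hr
    field_simp at key ⊢
    push_cast at key ⊢
    ring_nf
    ring_nf at key
    linear_combination r ^ 9 * r ^ (m * 4) * key
  -- g is antitone on [r0, ∞)
  have hgcont : ContinuousOn g (Set.Ici r0) :=
    fun r hr => ((hg r hr).continuousAt).continuousWithinAt
  have hanti : AntitoneOn g (Set.Ici r0) := by
    apply antitoneOn_of_deriv_nonpos (convex_Ici r0) hgcont
    · intro r hr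
      rw [interior_Ici] at hr
      exact ((hg r (Set.mem_Ici.mpr (le_of_lt hr))).differentiableAt).differentiableWithinAt
    · intro r hr
      rw [interior_Ici] at hr
      have hrpos : 0 < r := lt_of_lt_of_le hr0pos (le_of_lt hr)
      rw [(hg r (Set.mem_Ici.mpr (le_of_lt hr))).deriv]
      apply div_nonpos_of_nonpos_of_nonneg _ (by positivity)
      have hηr : 0 ≤ η r := hηnn r (Set.mem_Ici.mpr (le_of_lt hr))
      have hrsq : 2 * ((m : ℝ) + 1 + 2) ≤ r ^ 2 := by
        calc 2 * ((m : ℝ) + 1 + 2) = r0 ^ 2 := by rw [hr0sq]; push_cast; ring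
        _ ≤ r ^ 2 := by nlinarith [le_of_lt (show r0 < r from hr), hr0pos]
      nlinarith
  have hr₁ : r0 ≤ r₁ := le_trans hr₂ (le_of_lt hlt)
  have hgle : g r₁ ≤ g r₂ := hanti hr₂ hr₁ (le_of_lt hlt)
  have hr₁pos : 0 < r₁ := lt_of_lt_of_le hr0pos hr₁
  have hr₂pos : 0 < r₂ := lt_of_lt_of_le hr0pos hr₂
  have hη₂ : 0 ≤ η r₂ := hηnn r₂ hr₂
  have hη₁ : η r₁ ≤ ((↑(m + 1) : ℝ) / 2) * V r₁ := hii r₁ hr₁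
  have step1 : V r₁ / r₁ ^ (m + 1) - V r₂ / r₂ ^ (m + 1) ≤ 4 * (η r₁ / r₁ ^ (m + 3)) := by
    have h4 : 0 ≤ 4 * (η r₂ / r₂ ^ (m + 3)) := by positivity
    simp only [hgdef] at hgle
    linarith
  have step2 : 4 * (η r₁ / r₁ ^ (m + 3)) ≤ 2 * (↑(m + 1) : ℝ) * V r₁ / r₁ ^ (m + 1 + 2) := by
    have : (m : ℕ) + 1 + 2 = m + 3 := by ring
    rw [this, ← mul_div_assoc, div_le_div_iff₀ (by positivity) (by positivity)]
    nlinarith [pow_pos hr₁pos (m + 3), hη₁]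
  calc V r₁ / r₁ ^ (m + 1) - V r₂ / r₂ ^ (m + 1) ≤ 4 * (η r₁ / r₁ ^ (m + 3)) := step1
    _ ≤ 2 * (↑(m + 1) : ℝ) * V r₁ / r₁ ^ (m + 1 + 2) := step2
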